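/- Let N ≥ 1 and s, ε, λ ∈ ℝ. Let A be the N × N real matrix with diagonal entries A_{ii} = −((N−1)/(2N)) s and off-diagonal entries A_{ij} = s/(2N) for i ≠ j. Then det((ε + λ) · (A − λ I_N) − ε · A) = (−1)^N λ^N (λ + ε)(λ + ε + s/2)^{N−1}. -/

import Mathlib

open Real Matrix

lemma det_const_diag_offdiag (N : ℕ) (hN : 1 ≤ N) (a b : ℝ) :
    (Matrix.of fun i j : Fin N => if i = j then a else b).det
      = (a - b) ^ (N - 1) * (a + ((N : ℝ) - 1) * b) := by
  by_cases hab : a = b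
  · subst hab
    rcases Nat.lt_or_ge N 2 with h2 | h2
    · have hN1 : N = 1 := by omega
      subst hN1
      simp [Matrix.det_fin_one]
    · have h0 : (Matrix.of fun i j : Fin N => if i = j then a else a).det = 0 := by
        apply Matrix.det_zero_of_row_eq (i := ⟨0, by omega⟩) (j := ⟨1, by omega⟩)
        · simp [Fin.ext_iff]
        · funext k; simp
      rw [h0]
      have : a - a = 0 := sub_self a
      rw [this, zero_pow (by omega)]
      ring
  · have hne : a - b ≠ 0 := sub_ne_zero.mpr hab
    have hM : (Matrix.of fun i j : Fin N => if i = j then a else b)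
        = (a - b) • ((1 : Matrix (Fin N) (Fin N) ℝ)
            + Matrix.replicateCol Unit (fun _ => b / (a - b)) * Matrix.replicateRow Unit (fun _ => (1 : ℝ))) := by
      ext i j
      by_cases hij : i = j
      · subst hij
        simp [Matrix.mul_apply, Matrix.one_apply, Matrix.smul_apply]
        field_simp
        ring
      · simp [Matrix.mul_apply, Matrix.one_apply, hij, Matrix.smul_apply]
        field_simp
    rw [hM, Matrix.det_smul, Matrix.det_one_add_replicateCol_mul_replicateRow, Fintype.card_fin]
    have hdot : (fun _ : Fin N => (1 : ℝ)) ⬝ᵥ (fun _ => b / (a - b)) = N * (b / (a - b)) := by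
      simp [dotProduct, Finset.sum_const, Finset.card_univ]
    rw [hdot]
    have hN' : (a - b) ^ N = (a - b) ^ (N - 1) * (a - b) := by
      conv_lhs => rw [← Nat.sub_add_cancel hN]
      rw [pow_succ]
    rw [hN']
    have : (a - b) * (1 + ↑N * (b / (a - b))) = a + ((N : ℝ) - 1) * b := by
      field_simp; ring
    rw [mul_assoc, this]

/-- Determinant identity arising in the stability analysis of splay-type one-cluster
states: for the reduced circulant matrix `A` (diagonal `−((N−1)/(2N)) s`, off-diagonal
`s/(2N)`) one has `det((ε + λ)(A − λ I) − ε A) = (−1)^N λ^N (λ+ε)(λ+ε+s/2)^{N−1}`. -/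
theorem splay_reduced_determinant
    (N : ℕ) (hN : 1 ≤ N) (s ε lam : ℝ)
    (A : Matrix (Fin N) (Fin N) ℝ)
    (hA : ∀ i j, A i j =
      if i = j then -(((N : ℝ) - 1) / (2 * (N : ℝ))) * s else s / (2 * (N : ℝ))) :
    ((ε + lam) • (A - lam • (1 : Matrix (Fin N) (Fin N) ℝ)) - ε • A).det
      = (-1) ^ N * lam ^ N * (lam + ε) * (lam + ε + s / 2) ^ (N - 1) := by
  set a : ℝ := -(((N : ℝ) - 1) / (2 * (N : ℝ))) * s - (ε + lam) with ha
  set b : ℝ := s / (2 * (N : ℝ)) with hb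
  have hM : ((ε + lam) • (A - lam • (1 : Matrix (Fin N) (Fin N) ℝ)) - ε • A)
      = lam • (Matrix.of fun i j : Fin N => if i = j then a else b) := by
    ext i j
    by_cases hij : i = j
    · subst hij
      simp [hA, Matrix.one_apply, Matrix.smul_apply, Matrix.sub_apply, ha]
      ring
    · simp [hA, Matrix.one_apply, hij, Matrix.smul_apply, Matrix.sub_apply, hb]
      ring
  rw [hM, Matrix.det_smul, Fintype.card_fin, det_const_diag_offdiag N hN a b]
  have h1 : a - b = -(lam + ε + s / 2) := by
    rw [ha, hb]; field_simp; ring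
  have h2 : a + ((N : ℝ) - 1) * b = -(lam + ε) := by
    rw [ha, hb]
    by_cases hN0 : (N : ℝ) = 0
    · exfalso; exact_mod_cast absurd hN0 (Nat.cast_ne_zero.mpr (by omega))
    · field_simp; ring
  rw [h1, h2, neg_pow]
  have hpow : ((-1 : ℝ)) ^ N = (-1) ^ (N - 1) * -1 := by
    rw [← pow_succ, Nat.sub_add_cancel hN]
  rw [hpow]
  ring
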